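/- arXiv:1404.0229 — 3 statements merged into one kernel-verified Lean document; each statement's English description precedes it below -/
import Mathlib

section
/- Let N be a real random variable with cdf F and U an independent uniform (0,1) random variable. Then the random variable Y = (1−U)F(N⁻) + U F(N) is uniformly distributed on (0,1), where F(N⁻) is the left limit of F at N. -/
open MeasureTheory Set Filter ProbabilityTheory ENNReal

namespace RQU

variable {Ω : Type*} [MeasurableSpace Ω] {P : Measure Ω} [IsProbabilityMeasure P]
  {N : Ω → ℝ} {F : ℝ → ℝ}

lemma measure_le_eq (hF : ∀ x, F x = (P {ω | N ω ≤ x}).toReal) (x : ℝ) :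
    P {ω | N ω ≤ x} = ENNReal.ofReal (F x) := by
  rw [hF, ENNReal.ofReal_toReal (measure_ne_top _ _)]

lemma F_mono (hF : ∀ x, F x = (P {ω | N ω ≤ x}).toReal) : Monotone F := fun x y h => by
  rw [hF, hF]
  exact ENNReal.toReal_mono (measure_ne_top _ _) (measure_mono fun ω hω => le_trans hω h)

lemma F_nonneg (hF : ∀ x, F x = (P {ω | N ω ≤ x}).toReal) (x : ℝ) : 0 ≤ F x := by
  rw [hF]; exact ENNReal.toReal_nonneg

lemma F_le_one (hF : ∀ x, F x = (P {ω | N ω ≤ x}).toReal) (x : ℝ) : F x ≤ 1 := by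
  rw [hF]
  calc (P {ω | N ω ≤ x}).toReal ≤ (1 : ℝ≥0∞).toReal :=
        ENNReal.toReal_mono ENNReal.one_ne_top prob_le_one
    _ = 1 := by simp

lemma measure_lt_eq_iSup (hNm : Measurable N) (x : ℝ) :
    P {ω | N ω < x} = ⨆ n : ℕ, P {ω | N ω ≤ x - 1/(n+1)} := by
  have hmono : Monotone (fun n : ℕ => {ω | N ω ≤ x - 1/(n+1)}) := by
    intro a b hab ω (h : N ω ≤ _)
    have h2 : (1:ℝ)/(b+1) ≤ 1/(a+1) := by
      apply one_div_le_one_div_of_le (by positivity)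
      exact_mod_cast Nat.succ_le_succ hab
    simp only [mem_setOf_eq]
    linarith
  rw [← hmono.measure_iUnion]
  congr 1
  ext ω
  constructor
  · intro hω
    have hω' : N ω < x := hω
    obtain ⟨n, hn⟩ := exists_nat_one_div_lt (show (0:ℝ) < x - N ω by linarith)
    simp only [mem_iUnion, mem_setOf_eq]
    exact ⟨n, by linarith⟩
  · intro hω
    simp only [mem_iUnion, mem_setOf_eq] at hω
    obtain ⟨n, hn⟩ := hω
    have h0 : (0:ℝ) < 1/(n+1) := by positivity
    show N ω < x
    linarith

/-- Key bound: `P(F(N) ≤ c) ≤ c`. -/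
lemma K (hNm : Measurable N) (hF : ∀ x, F x = (P {ω | N ω ≤ x}).toReal) (c : ℝ) :
    P {ω | F (N ω) ≤ c} ≤ ENNReal.ofReal c := by
  rcases le_or_gt 1 c with h1 | h1
  · refine le_trans prob_le_one ?_
    rw [show (1:ℝ≥0∞) = ENNReal.ofReal 1 by simp]
    exact ENNReal.ofReal_le_ofReal h1
  have hmono : Monotone F := F_mono hF
  rcases eq_empty_or_nonempty {x : ℝ | F x ≤ c} with hLe | hLne
  · have h0 : {ω | F (N ω) ≤ c} = ∅ := by
      ext ω
      simp only [mem_setOf_eq, mem_empty_iff_false, iff_false]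
      intro h
      exact absurd (show N ω ∈ {x : ℝ | F x ≤ c} from h) (by simp [hLe])
    simp [h0]
  obtain ⟨m, hm⟩ : ∃ m : ℕ, c < F m := by
    by_contra h
    push_neg at h
    have hU : (⋃ n : ℕ, {ω | N ω ≤ (n:ℝ)}) = univ := by
      ext ω
      simp only [mem_iUnion, mem_setOf_eq, mem_univ, iff_true]
      obtain ⟨n, hn⟩ := exists_nat_ge (N ω)
      exact ⟨n, hn⟩
    have hmset : Monotone fun n : ℕ => {ω | N ω ≤ (n : ℝ)} := by
      intro a b hab ω hω
      have h1 : N ω ≤ (a:ℝ) := hω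
      have h2 : (a:ℝ) ≤ b := by exact_mod_cast hab
      show N ω ≤ (b:ℝ)
      linarith
    have h1' : (1 : ℝ≥0∞) ≤ ENNReal.ofReal c := by
      calc (1:ℝ≥0∞) = P univ := measure_univ.symm
        _ = ⨆ n : ℕ, P {ω | N ω ≤ (n:ℝ)} := by rw [← hU, hmset.measure_iUnion]
        _ ≤ ENNReal.ofReal c := iSup_le fun n => by
            rw [measure_le_eq hF]; exact ENNReal.ofReal_le_ofReal (h n)
    exact absurd h1' (not_le.mpr (ENNReal.ofReal_lt_one.mpr h1))
  have hbdd : BddAbove {x : ℝ | F x ≤ c} := by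
    refine ⟨m, fun x hx => ?_⟩
    refine le_of_not_gt fun hxm => ?_
    exact absurd (le_trans (hmono hxm.le) hx) (not_le.mpr hm)
  set s := sSup {x : ℝ | F x ≤ c} with hs
  by_cases hsL : F s ≤ c
  · have hsub : {ω | F (N ω) ≤ c} ⊆ {ω | N ω ≤ s} := fun ω hω => le_csSup hbdd hω
    calc P {ω | F (N ω) ≤ c} ≤ P {ω | N ω ≤ s} := measure_mono hsub
      _ = ENNReal.ofReal (F s) := measure_le_eq hF s
      _ ≤ ENNReal.ofReal c := ENNReal.ofReal_le_ofReal hsL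
  · have hsub : {ω | F (N ω) ≤ c} ⊆ {ω | N ω < s} := by
      intro ω hω
      have h1 : N ω ≤ s := le_csSup hbdd hω
      rcases lt_or_eq_of_le h1 with h | h
      · exact h
      · exact absurd (h ▸ hω) hsL
    calc P {ω | F (N ω) ≤ c} ≤ P {ω | N ω < s} := measure_mono hsub
      _ = ⨆ n : ℕ, P {ω | N ω ≤ s - 1/(n+1)} := measure_lt_eq_iSup hNm s
      _ ≤ ENNReal.ofReal c := by
          refine iSup_le fun n => ?_
          rw [measure_le_eq hF]
          refine ENNReal.ofReal_le_ofReal ?_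
          have hlt : s - 1/(n+1) < s := by
            have : (0:ℝ) < 1/(n+1) := by positivity
            linarith
          obtain ⟨x, hxL, hx⟩ := exists_lt_of_lt_csSup hLne hlt
          exact le_trans (hmono hx.le) hxL

end RQU

/-- If `N` is a real random variable with cdf `F` (so `F x = P(N ≤ x)`
and the left limit is `F(x⁻) = P(N < x)`) and `U` is an independent `(0,1)`-uniform
random variable, then `Y = (1-U) F(N⁻) + U F(N)` is uniformly distributed on `(0,1)`. -/
theorem randomized_quantile_uniform
    {Ω : Type*} [MeasurableSpace Ω] (P : Measure Ω) [IsProbabilityMeasure P]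
    (N U : Ω → ℝ) (hNm : Measurable N) (hUm : Measurable U)
    (hindep : IndepFun N U P)
    (hU : Measure.map U P = volume.restrict (Ioo (0:ℝ) 1))
    (F Fm : ℝ → ℝ)
    (hF : ∀ x, F x = (P {ω | N ω ≤ x}).toReal)
    (hFm : ∀ x, Fm x = (P {ω | N ω < x}).toReal) :
    Measure.map (fun ω => (1 - U ω) * Fm (N ω) + U ω * F (N ω)) P
      = volume.restrict (Ioo (0:ℝ) 1) := by
  have hmF : Monotone F := RQU.F_mono hF
  have hmFm : Monotone Fm := fun x y h => by
    rw [hFm, hFm]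
    exact ENNReal.toReal_mono (measure_ne_top _ _) (measure_mono fun ω hω => lt_of_lt_of_le hω h)
  have hFm_le_F : ∀ x, Fm x ≤ F x := fun x => by
    rw [hFm, hF]
    exact ENNReal.toReal_mono (measure_ne_top _ _) (measure_mono fun ω hω => le_of_lt (show N ω < _ from hω))
  have hF_le_Fm : ∀ x y : ℝ, x < y → F x ≤ Fm y := fun x y hxy => by
    rw [hFm, hF]
    exact ENNReal.toReal_mono (measure_ne_top _ _) (measure_mono fun ω hω => lt_of_le_of_lt hω hxy)
  have hF0 : ∀ x, 0 ≤ F x := RQU.F_nonneg hF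
  have hFm0 : ∀ x, 0 ≤ Fm x := fun x => by rw [hFm]; exact ENNReal.toReal_nonneg
  have hF1 : ∀ x, F x ≤ 1 := RQU.F_le_one hF
  have hPle : ∀ x, P {ω | N ω ≤ x} = ENNReal.ofReal (F x) := RQU.measure_le_eq hF
  have hPlt : ∀ x, P {ω | N ω < x} = ENNReal.ofReal (Fm x) := fun x => by
    rw [hFm, ENNReal.ofReal_toReal (measure_ne_top _ _)]
  set Y : Ω → ℝ := fun ω => (1 - U ω) * Fm (N ω) + U ω * F (N ω) with hYdef
  have hYm : Measurable Y :=
    ((measurable_const.sub hUm).mul (hmFm.measurable.comp hNm)).add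
      (hUm.mul (hmF.measurable.comp hNm))
  haveI : IsProbabilityMeasure (volume.restrict (Ioo (0:ℝ) 1)) := by
    constructor
    rw [Measure.restrict_apply MeasurableSet.univ, univ_inter, Real.volume_Ioo]
    simp
  haveI : IsProbabilityMeasure (Measure.map Y P) := Measure.isProbabilityMeasure_map hYm.aemeasurable
  set W : Set Ω := {ω | U ω ∉ Ioo (0:ℝ) 1} with hWdef
  have hWmeas : MeasurableSet W := (hUm measurableSet_Ioo).compl
  have hW0 : P W = 0 := by
    have h1 : P (U ⁻¹' Ioo (0:ℝ) 1) = 1 := by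
      rw [← Measure.map_apply hUm measurableSet_Ioo, hU,
        Measure.restrict_apply measurableSet_Ioo, inter_self, Real.volume_Ioo]
      simp
    have h2 : W = (U ⁻¹' Ioo (0:ℝ) 1)ᶜ := rfl
    rw [h2, prob_compl_eq_one_sub (hUm measurableSet_Ioo), h1, tsub_self]
  have hUP : ∀ c : ℝ, 0 ≤ c → c ≤ 1 → P {ω | U ω ≤ c} = ENNReal.ofReal c := by
    intro c hc0 hc1
    have h1 : {ω | U ω ≤ c} = U ⁻¹' Iic c := rfl
    rw [h1, ← Measure.map_apply hUm measurableSet_Iic, hU,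
      Measure.restrict_apply measurableSet_Iic]
    rcases eq_or_lt_of_le hc1 with h | h
    · rw [h, show Iic (1:ℝ) ∩ Ioo 0 1 = Ioo 0 1 from
        inter_eq_self_of_subset_right fun x hx => hx.2.le, Real.volume_Ioo]
      norm_num
    · have h2 : Iic c ∩ Ioo (0:ℝ) 1 = Ioc 0 c := by
        ext x
        simp only [mem_inter_iff, mem_Iic, mem_Ioo, mem_Ioc]
        constructor
        · rintro ⟨ha, hb, _⟩; exact ⟨hb, ha⟩
        · rintro ⟨ha, hb⟩; exact ⟨hb, ha, lt_of_le_of_lt hb h⟩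
      rw [h2, Real.volume_Ioc, sub_zero]
  refine MeasureTheory.Measure.ext_of_Iic _ _ fun t => ?_
  rw [Measure.map_apply hYm measurableSet_Iic, Measure.restrict_apply measurableSet_Iic]
  have hYIic : Y ⁻¹' Iic t = {ω | Y ω ≤ t} := rfl
  rw [hYIic]
  rcases le_or_gt t 0 with ht0 | ht0
  · have hR : Iic t ∩ Ioo (0:ℝ) 1 = ∅ := by
      ext x
      simp only [mem_inter_iff, mem_Iic, mem_Ioo, mem_empty_iff_false, iff_false]
      rintro ⟨h1, h2, _⟩; linarith
    rw [hR, measure_empty]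
    have hsub : {ω | Y ω ≤ t} ⊆ W ∪ {ω | F (N ω) ≤ (0:ℝ)} := by
      intro ω hω
      by_cases hωW : ω ∈ W
      · exact Or.inl hωW
      · right
        simp only [hWdef, mem_setOf_eq, not_not, mem_Ioo] at hωW
        simp only [mem_setOf_eq] at hω ⊢
        have h1 : 0 ≤ (1 - U ω) * Fm (N ω) :=
          mul_nonneg (by linarith [hωW.2]) (hFm0 _)
        have h2 : U ω * F (N ω) ≤ 0 := by
          simp only [hYdef] at hω; linarith
        nlinarith [hωW.1]
    refine le_antisymm ?_ (zero_le)
    calc P {ω | Y ω ≤ t} ≤ P W + P {ω | F (N ω) ≤ (0:ℝ)} :=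
          le_trans (measure_mono hsub) (measure_union_le _ _)
      _ ≤ 0 + ENNReal.ofReal 0 := add_le_add hW0.le (RQU.K hNm hF 0)
      _ = 0 := by simp
  rcases lt_or_ge t 1 with ht1 | ht1
  swap
  · have hR : Iic t ∩ Ioo (0:ℝ) 1 = Ioo 0 1 :=
      inter_eq_self_of_subset_right fun x hx => le_trans hx.2.le ht1
    rw [hR, Real.volume_Ioo]
    have hsub : Wᶜ ⊆ {ω | Y ω ≤ t} := by
      intro ω hω
      simp only [hWdef, mem_compl_iff, mem_setOf_eq, not_not, mem_Ioo] at hω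
      have h1 : Fm (N ω) ≤ F (N ω) := hFm_le_F _
      simp only [mem_setOf_eq, hYdef]
      nlinarith [hω.1, hω.2, hF1 (N ω), hFm0 (N ω)]
    have h1 : P {ω | Y ω ≤ t} = 1 := by
      refine le_antisymm prob_le_one ?_
      calc (1:ℝ≥0∞) = P Wᶜ := by
            rw [prob_compl_eq_one_sub hWmeas, hW0, tsub_zero]
        _ ≤ _ := measure_mono hsub
    rw [h1]
    norm_num
  · -- main case 0 < t < 1
    have hRHS : Iic t ∩ Ioo (0:ℝ) 1 = Ioc 0 t := by
      ext x
      simp only [mem_inter_iff, mem_Iic, mem_Ioo, mem_Ioc]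
      constructor
      · rintro ⟨ha, hb, _⟩; exact ⟨hb, ha⟩
      · rintro ⟨ha, hb⟩; exact ⟨hb, ha, lt_of_le_of_lt hb ht1⟩
    rw [hRHS, Real.volume_Ioc, sub_zero]
    -- the quantile q
    have hSne : {x : ℝ | t ≤ F x}.Nonempty := by
      by_contra h
      rw [not_nonempty_iff_eq_empty] at h
      have hall : ∀ x : ℝ, F x < t := by
        intro x
        by_contra hx
        push_neg at hx
        exact absurd (show x ∈ {x : ℝ | t ≤ F x} from hx) (by simp [h])
      have hU2 : (⋃ n : ℕ, {ω | N ω ≤ (n:ℝ)}) = univ := by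
        ext ω
        simp only [mem_iUnion, mem_setOf_eq, mem_univ, iff_true]
        obtain ⟨n, hn⟩ := exists_nat_ge (N ω)
        exact ⟨n, hn⟩
      have hmset : Monotone fun n : ℕ => {ω | N ω ≤ (n : ℝ)} := by
        intro a b hab ω hω
        have h1 : N ω ≤ (a:ℝ) := hω
        have h2 : (a:ℝ) ≤ b := by exact_mod_cast hab
        show N ω ≤ (b:ℝ)
        linarith
      have h1' : (1 : ℝ≥0∞) ≤ ENNReal.ofReal t := by
        calc (1:ℝ≥0∞) = P univ := measure_univ.symm
          _ = ⨆ n : ℕ, P {ω | N ω ≤ (n:ℝ)} := by rw [← hU2, hmset.measure_iUnion]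
          _ ≤ ENNReal.ofReal t := iSup_le fun n => by
              rw [hPle]; exact ENNReal.ofReal_le_ofReal (hall n).le
      exact absurd h1' (not_le.mpr (ENNReal.ofReal_lt_one.mpr ht1))
    have hSbdd : BddBelow {x : ℝ | t ≤ F x} := by
      obtain ⟨m, hm⟩ : ∃ m : ℕ, F (-(m:ℝ)) < t := by
        by_contra h
        push_neg at h
        have hI : (⋂ n : ℕ, {ω | N ω ≤ -(n:ℝ)}) = ∅ := by
          ext ω
          simp only [mem_iInter, mem_setOf_eq, mem_empty_iff_false, iff_false]
          push_neg
          obtain ⟨n, hn⟩ := exists_nat_gt (-(N ω))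
          exact ⟨n, by linarith⟩
        have hanti : Antitone fun n : ℕ => {ω | N ω ≤ -(n:ℝ)} := by
          intro a b hab ω hω
          have h1 : N ω ≤ -(b:ℝ) := hω
          have h2 : (a:ℝ) ≤ b := by exact_mod_cast hab
          show N ω ≤ -(a:ℝ)
          linarith
        have h0 : (0:ℝ≥0∞) = ⨅ n : ℕ, P {ω | N ω ≤ -(n:ℝ)} := by
          rw [← hanti.measure_iInter (fun n => (hNm measurableSet_Iic).nullMeasurableSet)
            ⟨0, measure_ne_top _ _⟩, hI, measure_empty]
        have hle : ENNReal.ofReal t ≤ (0:ℝ≥0∞) := by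
          rw [h0]
          exact le_iInf fun n => by
            rw [hPle]; exact ENNReal.ofReal_le_ofReal (h n)
        simp only [nonpos_iff_eq_zero, ENNReal.ofReal_eq_zero] at hle
        linarith
      exact ⟨-(m:ℝ), fun x hx => le_of_not_gt fun hc =>
        absurd (le_trans hx (hmF hc.le)) (not_le.mpr hm)⟩
    set q : ℝ := sInf {x : ℝ | t ≤ F x} with hqdef
    have hqlb : ∀ x, x < q → F x < t := by
      intro x hx
      by_contra h
      push_neg at h
      exact absurd (csInf_le hSbdd (show x ∈ {x : ℝ | t ≤ F x} from h)) (not_le.mpr hx)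
    have hFq : t ≤ F q := by
      have hI : {ω | N ω ≤ q} = ⋂ n : ℕ, {ω | N ω ≤ q + 1/(n+1)} := by
        ext ω
        simp only [mem_iInter, mem_setOf_eq]
        constructor
        · intro h n
          have h0 : (0:ℝ) < 1/(n+1) := by positivity
          linarith
        · intro h
          by_contra hc
          push_neg at hc
          obtain ⟨n, hn⟩ := exists_nat_one_div_lt (show (0:ℝ) < N ω - q by linarith)
          linarith [h n]
      have hanti : Antitone fun n : ℕ => {ω | N ω ≤ q + 1/(n+1)} := by
        intro a b hab ω hω
        have h1 : N ω ≤ q + 1/(b+1) := hω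
        have h2 : (1:ℝ)/(b+1) ≤ 1/(a+1) := by
          apply one_div_le_one_div_of_le (by positivity)
          exact_mod_cast Nat.succ_le_succ hab
        show N ω ≤ q + 1/(a+1)
        linarith
      have hle : ENNReal.ofReal t ≤ P {ω | N ω ≤ q} := by
        rw [hI, hanti.measure_iInter (fun n => (hNm measurableSet_Iic).nullMeasurableSet)
          ⟨0, measure_ne_top _ _⟩]
        refine le_iInf fun n => ?_
        rw [hPle]
        refine ENNReal.ofReal_le_ofReal ?_
        obtain ⟨a, haS, ha⟩ := Real.lt_sInf_add_pos hSne (show (0:ℝ) < 1/(n+1) by positivity)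
        exact le_trans haS (hmF ha.le)
      rw [hPle] at hle
      exact (ENNReal.ofReal_le_ofReal_iff (hF0 q)).mp hle
    have hFmq : Fm q ≤ t := by
      have hle : P {ω | N ω < q} ≤ ENNReal.ofReal t := by
        rw [RQU.measure_lt_eq_iSup hNm]
        refine iSup_le fun n => ?_
        rw [hPle]
        refine ENNReal.ofReal_le_ofReal ?_
        refine (hqlb _ ?_).le
        have h0 : (0:ℝ) < 1/(n+1) := by positivity
        linarith
      rw [hPlt] at hle
      exact (ENNReal.ofReal_le_ofReal_iff ht0.le).mp hle
    have hΔ0 : 0 ≤ F q - Fm q := sub_nonneg.mpr (hFm_le_F q)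
    have htFm : 0 ≤ t - Fm q := sub_nonneg.mpr hFmq
    set c : ℝ := if F q = Fm q then 0 else (t - Fm q) / (F q - Fm q) with hcdef
    have hc0 : 0 ≤ c := by
      rw [hcdef]
      split_ifs with h
      · exact le_rfl
      · exact div_nonneg htFm hΔ0
    have hΔc : (F q - Fm q) * c = t - Fm q := by
      rw [hcdef]
      split_ifs with h
      · rw [mul_zero]
        linarith [hFq, hFmq]
      · rw [mul_comm, div_mul_cancel₀]
        intro hz
        exact h (by linarith)
    have hc1 : c ≤ 1 := by
      rw [hcdef]
      split_ifs with h
      · norm_num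
      · rw [div_le_one (lt_of_le_of_ne hΔ0 (fun hz => h (by linarith)))]
        linarith [hFq]
    -- the events
    have hPE1 : P {ω | N ω < q} = ENNReal.ofReal (Fm q) := hPlt q
    have hPNq : P {ω | N ω = q} = ENNReal.ofReal (F q - Fm q) := by
      have h1 : {ω | N ω = q} = {ω | N ω ≤ q} \ {ω | N ω < q} := by
        ext ω
        simp only [mem_setOf_eq, mem_diff, not_lt]
        constructor
        · intro h; exact ⟨h.le, h.ge⟩
        · intro h; exact le_antisymm h.1 h.2
      rw [h1, measure_diff (show {ω | N ω < q} ⊆ {ω | N ω ≤ q} from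
          fun ω (h : N ω < q) => h.le)
        (hNm measurableSet_Iio).nullMeasurableSet (measure_ne_top _ _),
        hPle, hPlt, ← ENNReal.ofReal_sub _ (hFm0 q)]
    have hPE2 : P ({ω | N ω = q} ∩ {ω | U ω ≤ c}) = ENNReal.ofReal (t - Fm q) := by
      have hpre : {ω | N ω = q} ∩ {ω | U ω ≤ c} = N ⁻¹' {q} ∩ U ⁻¹' (Iic c) := rfl
      rw [hpre, hindep.measure_inter_preimage_eq_mul _ _ (measurableSet_singleton q)
        measurableSet_Iic]
      have h2 : P (N ⁻¹' {q}) = ENNReal.ofReal (F q - Fm q) := hPNq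
      have h3 : P (U ⁻¹' Iic c) = ENNReal.ofReal c := hUP c hc0 hc1
      rw [h2, h3, ← ENNReal.ofReal_mul hΔ0, hΔc]
    have hPA : P ({ω | F (N ω) ≤ F q} \ {ω | N ω ≤ q}) = 0 := by
      have hsub2 : ({ω | F (N ω) ≤ F q} \ {ω | N ω ≤ q}) ∪ {ω | N ω ≤ q}
          ⊆ {ω | F (N ω) ≤ F q} := by
        rintro ω (h | h)
        · exact h.1
        · exact hmF h
      have hdisj : Disjoint ({ω | F (N ω) ≤ F q} \ {ω | N ω ≤ q}) {ω | N ω ≤ q} :=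
        disjoint_sdiff_left
      have h1 : P ({ω | F (N ω) ≤ F q} \ {ω | N ω ≤ q}) + ENNReal.ofReal (F q)
          ≤ ENNReal.ofReal (F q) := by
        calc P ({ω | F (N ω) ≤ F q} \ {ω | N ω ≤ q}) + ENNReal.ofReal (F q)
            = P ({ω | F (N ω) ≤ F q} \ {ω | N ω ≤ q}) + P {ω | N ω ≤ q} := by rw [hPle]
          _ = P (({ω | F (N ω) ≤ F q} \ {ω | N ω ≤ q}) ∪ {ω | N ω ≤ q}) :=
              (measure_union hdisj (hNm measurableSet_Iic)).symm
          _ ≤ P {ω | F (N ω) ≤ F q} := measure_mono hsub2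
          _ ≤ ENNReal.ofReal (F q) := RQU.K hNm hF (F q)
      have h2 : P ({ω | F (N ω) ≤ F q} \ {ω | N ω ≤ q}) ≤ 0 :=
        ENNReal.le_of_add_le_add_right ENNReal.ofReal_ne_top (by rw [zero_add]; exact h1)
      exact le_antisymm h2 (zero_le)
    -- lower bound
    have hlow : {ω | N ω < q} ∪ ({ω | N ω = q} ∩ {ω | U ω ≤ c})
        ⊆ {ω | Y ω ≤ t} ∪ W := by
      intro ω hω
      by_cases hωW : ω ∈ W
      · exact Or.inr hωW
      left
      simp only [hWdef, mem_setOf_eq, not_not, mem_Ioo] at hωW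
      obtain ⟨hU0, hU1⟩ := hωW
      show (1 - U ω) * Fm (N ω) + U ω * F (N ω) ≤ t
      rcases hω with h | h
      · have h1 : F (N ω) < t := hqlb _ h
        have h2 : Fm (N ω) ≤ F (N ω) := hFm_le_F _
        nlinarith
      · have hNq : N ω = q := h.1
        have hUc : U ω ≤ c := h.2
        rw [hNq]
        nlinarith [hΔc, mul_le_mul_of_nonneg_right hUc hΔ0]
    have hE2m : MeasurableSet ({ω | N ω = q} ∩ {ω | U ω ≤ c}) :=
      (hNm (measurableSet_singleton q)).inter (hUm measurableSet_Iic)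
    have hd12 : Disjoint {ω | N ω < q} ({ω | N ω = q} ∩ {ω | U ω ≤ c}) := by
      rw [disjoint_left]
      intro ω h1 h2
      have h1' : N ω < q := h1
      have h2' : N ω = q := h2.1
      exact absurd h2' (ne_of_lt h1')
    have hlowP : ENNReal.ofReal t ≤ P {ω | Y ω ≤ t} := by
      calc ENNReal.ofReal t = ENNReal.ofReal (Fm q + (t - Fm q)) := by congr 1; ring
        _ = ENNReal.ofReal (Fm q) + ENNReal.ofReal (t - Fm q) :=
            ENNReal.ofReal_add (hFm0 q) htFm
        _ = P {ω | N ω < q} + P ({ω | N ω = q} ∩ {ω | U ω ≤ c}) := by rw [hPE1, hPE2]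
        _ = P ({ω | N ω < q} ∪ ({ω | N ω = q} ∩ {ω | U ω ≤ c})) :=
            (measure_union hd12 hE2m).symm
        _ ≤ P ({ω | Y ω ≤ t} ∪ W) := measure_mono hlow
        _ ≤ P {ω | Y ω ≤ t} + P W := measure_union_le _ _
        _ = P {ω | Y ω ≤ t} := by rw [hW0, add_zero]
    -- upper bound
    have hPE3 : P (if F q = Fm q then {ω | N ω = q} else (∅ : Set Ω)) = 0 := by
      split_ifs with h
      · rw [hPNq, show F q - Fm q = 0 by linarith, ENNReal.ofReal_zero]
      · exact measure_empty
    have hup : {ω | Y ω ≤ t} ⊆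
        ({ω | N ω < q} ∪ ({ω | N ω = q} ∩ {ω | U ω ≤ c}))
        ∪ ((if F q = Fm q then {ω | N ω = q} else (∅ : Set Ω))
          ∪ (({ω | F (N ω) ≤ F q} \ {ω | N ω ≤ q}) ∪ W)) := by
      intro ω hω
      by_cases hωW : ω ∈ W
      · exact Or.inr (Or.inr (Or.inr hωW))
      have hωW' : ω ∉ W := hωW
      simp only [hWdef, mem_setOf_eq, not_not, mem_Ioo] at hωW'
      obtain ⟨hU0, hU1⟩ := hωW'
      have hYt : (1 - U ω) * Fm (N ω) + U ω * F (N ω) ≤ t := hω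
      rcases lt_trichotomy (N ω) q with h | h | h
      · exact Or.inl (Or.inl h)
      · by_cases hΔz : F q = Fm q
        · refine Or.inr (Or.inl ?_)
          rw [if_pos hΔz]
          exact h
        · refine Or.inl (Or.inr ⟨h, ?_⟩)
          show U ω ≤ c
          rw [h] at hYt
          have hΔpos : 0 < F q - Fm q := lt_of_le_of_ne hΔ0 (fun hz => hΔz (by linarith))
          have h2 : U ω * (F q - Fm q) ≤ c * (F q - Fm q) := by nlinarith [hΔc, hYt]
          exact le_of_mul_le_mul_right h2 hΔpos
      · refine Or.inr (Or.inr (Or.inl ⟨?_, not_le.mpr h⟩))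
        show F (N ω) ≤ F q
        have h1 : F q ≤ Fm (N ω) := hF_le_Fm q (N ω) h
        have h2 : Fm (N ω) ≤ F (N ω) := hFm_le_F _
        nlinarith [hFq, hYt, hU0, hU1,
          mul_nonneg (by linarith : (0:ℝ) ≤ 1 - U ω) (by linarith : (0:ℝ) ≤ Fm (N ω) - F q)]
    have hupP : P {ω | Y ω ≤ t} ≤ ENNReal.ofReal t := by
      calc P {ω | Y ω ≤ t}
          ≤ P ({ω | N ω < q} ∪ ({ω | N ω = q} ∩ {ω | U ω ≤ c}))
            + P ((if F q = Fm q then {ω | N ω = q} else (∅ : Set Ω))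
              ∪ (({ω | F (N ω) ≤ F q} \ {ω | N ω ≤ q}) ∪ W)) :=
            le_trans (measure_mono hup) (measure_union_le _ _)
        _ ≤ (P {ω | N ω < q} + P ({ω | N ω = q} ∩ {ω | U ω ≤ c}))
            + (P (if F q = Fm q then {ω | N ω = q} else (∅ : Set Ω))
              + (P ({ω | F (N ω) ≤ F q} \ {ω | N ω ≤ q}) + P W)) :=
            add_le_add (measure_union_le _ _)
              (le_trans (measure_union_le _ _) (add_le_add le_rfl (measure_union_le _ _)))
        _ = ENNReal.ofReal (Fm q) + ENNReal.ofReal (t - Fm q) := by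
            rw [hPE1, hPE2, hPE3, hPA, hW0]
            simp
        _ = ENNReal.ofReal t := by
            rw [← ENNReal.ofReal_add (hFm0 q) htFm]
            congr 1
            ring
    exact le_antisymm hupP hlowP
end

section
/- Let N⁰ and N¹ be integer-valued random variables with probability mass functions p⁰ > 0 and p¹ satisfying the monotone likelihood ratio property: p¹(x₁)/p⁰(x₁) ≥ p¹(x₀)/p⁰(x₀) whenever x₁ > x₀. Let F⁰ be the cdf of N⁰ and U ~ Uniform(0,1) independent of N¹. Then Y = (1−U)F⁰(N¹ − 1) + U F⁰(N¹) has a piecewise-linear cdf on [0,1] that is convex; its density at y ∈ (F⁰(x−1), F⁰(x)) equals p¹(x)/p⁰(x). -/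
open MeasureTheory Set ProbabilityTheory

section Aux
lemma aux_clamp (c d y : ℝ) (hd : 0 < d) :
    max (min ((y - c)/d) 1) 0 = (max (min y (c+d)) c - c)/d := by
  rcases le_total y c with h | h
  · rw [min_eq_left (show y ≤ c + d by linarith), max_eq_right h,
      min_eq_left (by rw [div_le_one hd]; linarith),
      max_eq_right (div_nonpos_of_nonpos_of_nonneg (by linarith) hd.le)]
    simp
  rcases le_total y (c+d) with h2 | h2
  · rw [min_eq_left h2, max_eq_left h,
      min_eq_left (by rw [div_le_one hd]; linarith),
      max_eq_left (div_nonneg (by linarith) hd.le)]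
  · rw [min_eq_right h2, max_eq_left (by linarith : c ≤ c + d),
      min_eq_right (by rw [le_div_iff₀ hd]; linarith),
      max_eq_left zero_le_one]
    field_simp
    ring

lemma aux_mid_diff (s t p q : ℝ) (hst : s ≤ t) (hpq : p ≤ q) :
    max (min t q) p - max (min s q) p = (volume (Ioc s t ∩ Ioc p q)).toReal := by
  rw [Set.Ioc_inter_Ioc, Real.volume_Ioc, ENNReal.toReal_ofReal']
  rcases le_total t q with h1 | h1 <;> rcases le_total s q with h2 | h2 <;>
    rcases le_total t p with h3 | h3 <;> rcases le_total s p with h4 | h4 <;>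
    simp only [min_def, max_def] <;> split_ifs <;> linarith

lemma aux_iic (a : ℝ) :
    (volume.restrict (Ioo (0:ℝ) 1)) (Iic a) = ENNReal.ofReal (min a 1) := by
  rw [Measure.restrict_apply measurableSet_Iic]
  rcases le_total 1 a with h | h
  · have : Iic a ∩ Ioo (0:ℝ) 1 = Ioo 0 1 :=
      inter_eq_self_of_subset_right (fun u hu => le_trans hu.2.le h)
    rw [min_eq_right h, this, Real.volume_Ioo]; norm_num
  · rw [min_eq_left h]
    apply le_antisymm
    · refine le_trans (measure_mono (show Iic a ∩ Ioo (0:ℝ) 1 ⊆ Ioc 0 a from ?_)) ?_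
      · rintro u ⟨h1, h2, h3⟩; exact ⟨h2, h1⟩
      · rw [Real.volume_Ioc, sub_zero]
    · refine le_trans (le_of_eq ?_) (measure_mono (show Ioo (0:ℝ) a ⊆ Iic a ∩ Ioo 0 1 from ?_))
      · rw [Real.volume_Ioo, sub_zero]
      · rintro u ⟨h1, h2⟩; exact ⟨h2.le, h1, lt_of_lt_of_le h2 h⟩
end Aux

/-- discrete MLR case: if `p⁰ > 0` and `p¹` are pmfs on `ℤ` with the
monotone likelihood ratio property, `F⁰` is the cdf associated with `p⁰`, `N¹` has pmf
`p¹`, and `U` is `(0,1)`-uniform and independent of `N¹`, then the cdf of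
`Y = (1-U) F⁰(N¹-1) + U F⁰(N¹)` is convex on `[0,1]` and is piecewise linear: on each
interval `[F⁰(x-1), F⁰(x)]` it is affine with slope `p¹(x)/p⁰(x)` (so the density at
`y ∈ (F⁰(x-1), F⁰(x))` equals `p¹(x)/p⁰(x)`). -/
theorem mlr_discrete_convex_piecewise_linear_cdf
    {Ω : Type*} [MeasurableSpace Ω] (P : Measure Ω) [IsProbabilityMeasure P]
    (p0 p1 : ℤ → ℝ) (F0 : ℤ → ℝ)
    (hp0pos : ∀ x, 0 < p0 x) (hp1nonneg : ∀ x, 0 ≤ p1 x)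
    (hF0step : ∀ x : ℤ, F0 x = F0 (x - 1) + p0 x)
    (hF0bot : Filter.Tendsto F0 Filter.atBot (nhds 0))
    (hF0top : Filter.Tendsto F0 Filter.atTop (nhds 1))
    (hMLR : ∀ x0 x1 : ℤ, x0 < x1 → p1 x0 / p0 x0 ≤ p1 x1 / p0 x1)
    (N1 : Ω → ℤ) (U : Ω → ℝ) (hN1m : Measurable N1) (hUm : Measurable U)
    (hindep : IndepFun N1 U P)
    (hU : Measure.map U P = volume.restrict (Ioo (0:ℝ) 1))
    (hp1 : ∀ x : ℤ, p1 x = (P {ω | N1 ω = x}).toReal)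
    (G : ℝ → ℝ)
    (hG : ∀ y : ℝ, G y =
      (P {ω | (1 - U ω) * F0 (N1 ω - 1) + U ω * F0 (N1 ω) ≤ y}).toReal) :
    ConvexOn ℝ (Icc (0:ℝ) 1) G ∧
      ∀ x : ℤ, ∀ y ∈ Icc (F0 (x - 1)) (F0 x),
        G y = G (F0 (x - 1)) + p1 x / p0 x * (y - F0 (x - 1)) := by
  -- notation
  set d : ℤ → ℝ := fun z => p1 z / p0 z with hd
  have hd0 : ∀ z, 0 ≤ d z := fun z => div_nonneg (hp1nonneg z) (hp0pos z).le
  -- basic F0 facts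
  have hF0lt : ∀ z : ℤ, F0 (z-1) < F0 z := fun z => by
    rw [hF0step z]; linarith [hp0pos z]
  have hmonoF : StrictMono F0 := strictMono_int_of_lt_succ (fun z => by
    have := hF0lt (z+1); simpa using this)
  have h0le : ∀ z, 0 ≤ F0 z := fun z =>
    le_of_tendsto hF0bot (Filter.eventually_atBot.mpr ⟨z, fun w hw => hmonoF.monotone hw⟩)
  have hle1 : ∀ z, F0 z ≤ 1 := fun z =>
    ge_of_tendsto hF0top (Filter.eventually_atTop.mpr ⟨z, fun w hw => hmonoF.monotone hw⟩)
  have hF0pos : ∀ z, 0 < F0 z := fun z => by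
    rw [hF0step z]; linarith [hp0pos z, h0le (z-1)]
  -- find interval containing a point of (0,1)
  have hfind : ∀ u : ℝ, 0 < u → u < 1 → ∃ z : ℤ, F0 (z-1) < u ∧ u ≤ F0 z := by
    intro u hu0 hu1
    have hne : ∃ z, u ≤ F0 z := (hF0top.eventually (eventually_ge_nhds hu1)).exists
    have hbdd : ∃ b : ℤ, ∀ z, u ≤ F0 z → b ≤ z := by
      obtain ⟨b, hb⟩ := Filter.eventually_atBot.mp (hF0bot.eventually (eventually_lt_nhds hu0))
      refine ⟨b+1, fun z hz => ?_⟩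
      by_contra hc; push_neg at hc
      exact absurd (hb z (by omega)) (not_lt.mpr hz)
    obtain ⟨z, hz, hleast⟩ := Int.exists_least_of_bdd hbdd hne
    refine ⟨z, ?_, hz⟩
    by_contra hc; push_neg at hc
    have := hleast (z-1) hc; omega
  -- summability of p1
  have hdisjN : Pairwise (Function.onFun Disjoint fun z : ℤ => N1 ⁻¹' {z}) :=
    fun i j hij => (disjoint_singleton.mpr hij).preimage N1
  have hp1' : ∀ z : ℤ, p1 z = (P (N1 ⁻¹' {z})).toReal := fun z => hp1 z
  have hp1sum : Summable p1 := by
    rw [show p1 = fun z => (P (N1 ⁻¹' {z})).toReal from funext hp1']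
    apply ENNReal.summable_toReal
    rw [← measure_iUnion hdisjN (fun z => hN1m (measurableSet_singleton z))]
    exact measure_ne_top P _
  -- key distribution formula
  set m : ℤ → ℝ → ℝ := fun z y => max (min y (F0 z)) (F0 (z-1)) with hm
  have hkey : ∀ y : ℝ, G y = ∑' z : ℤ, d z * (m z y - F0 (z-1)) := by
    haveI hPM : IsProbabilityMeasure (Measure.map N1 P) :=
      Measure.isProbabilityMeasure_map hN1m.aemeasurable
    have hmap : Measure.map (fun ω => (N1 ω, U ω)) P
        = (Measure.map N1 P).prod (volume.restrict (Ioo (0:ℝ) 1)) := by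
      rw [← hU]
      exact (indepFun_iff_map_prod_eq_prod_map_map hN1m.aemeasurable hUm.aemeasurable).mp hindep
    intro y
    have hset : {ω | (1 - U ω) * F0 (N1 ω - 1) + U ω * F0 (N1 ω) ≤ y}
        = (fun ω => (N1 ω, U ω)) ⁻¹'
          (⋃ z : ℤ, {z} ×ˢ Iic ((y - F0 (z-1)) / p0 z)) := by
      ext ω
      have hrw : (1 - U ω) * F0 (N1 ω - 1) + U ω * F0 (N1 ω)
          = F0 (N1 ω - 1) + U ω * p0 (N1 ω) := by
        rw [hF0step (N1 ω)]; ring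
      simp only [mem_setOf_eq, mem_preimage, mem_iUnion, mem_prod, mem_singleton_iff, mem_Iic]
      constructor
      · intro h
        refine ⟨N1 ω, rfl, ?_⟩
        rw [le_div_iff₀ (hp0pos (N1 ω))]
        linarith [hrw]
      · rintro ⟨z, hz, hu⟩
        subst hz
        rw [le_div_iff₀ (hp0pos (N1 ω))] at hu
        linarith [hrw]
    have hEm : ∀ z : ℤ, MeasurableSet (({z} ×ˢ Iic ((y - F0 (z-1)) / p0 z) : Set (ℤ × ℝ))) :=
      fun z => (measurableSet_singleton z).prod measurableSet_Iic
    have hdisjE : Pairwise (Function.onFun Disjoint fun z : ℤ =>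
        ({z} ×ˢ Iic ((y - F0 (z-1)) / p0 z) : Set (ℤ × ℝ))) := by
      intro i j hij
      simp only [Function.onFun, Set.disjoint_left]
      rintro ⟨a, b⟩ ⟨ha, -⟩ ⟨ha', -⟩
      cases ha
      exact hij ha'
    have hprodz : ∀ z : ℤ, ((Measure.map N1 P).prod (volume.restrict (Ioo (0:ℝ) 1)))
        ({z} ×ˢ Iic ((y - F0 (z-1)) / p0 z))
        = P (N1 ⁻¹' {z}) * ENNReal.ofReal (min ((y - F0 (z-1)) / p0 z) 1) := by
      intro z
      rw [Measure.prod_prod, Measure.map_apply hN1m (measurableSet_singleton z), aux_iic]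
    rw [hG y, hset, ← Measure.map_apply (hN1m.prodMk hUm) (MeasurableSet.iUnion hEm), hmap,
      measure_iUnion hdisjE hEm, tsum_congr hprodz,
      ENNReal.tsum_toReal_eq
        (fun z => ENNReal.mul_ne_top (measure_ne_top P _) ENNReal.ofReal_ne_top)]
    apply tsum_congr
    intro z
    rw [ENNReal.toReal_mul, ENNReal.toReal_ofReal', ← hp1' z,
      aux_clamp (F0 (z-1)) (p0 z) y (hp0pos z), ← hF0step z]
    simp only [hd, hm]
    rw [div_mul_eq_mul_div, mul_div_assoc]
  -- per-term bounds
  have hterm_nonneg : ∀ z y, 0 ≤ d z * (m z y - F0 (z-1)) := fun z y =>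
    mul_nonneg (hd0 z) (by simp [hm, le_max_right])
  have hterm_le : ∀ z y, d z * (m z y - F0 (z-1)) ≤ p1 z := by
    intro z y
    have h1 : m z y - F0 (z-1) ≤ p0 z := by
      have : m z y ≤ F0 z := max_le (min_le_right _ _) (hF0lt z).le
      have := hF0step z; simp only [hm] at *; linarith
    calc d z * (m z y - F0 (z-1)) ≤ d z * p0 z :=
          mul_le_mul_of_nonneg_left h1 (hd0 z)
      _ = p1 z := div_mul_cancel₀ _ (hp0pos z).ne'
  have hsumm : ∀ y, Summable fun z => d z * (m z y - F0 (z-1)) :=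
    fun y => Summable.of_nonneg_of_le (fun z => hterm_nonneg z y) (fun z => hterm_le z y) hp1sum
  -- difference formula
  have hdiff : ∀ s t : ℝ, s ≤ t →
      G t - G s = ∑' z : ℤ, d z * (volume (Ioc s t ∩ Ioc (F0 (z-1)) (F0 z))).toReal := by
    intro s t hst
    rw [hkey t, hkey s, ← Summable.tsum_sub (hsumm t) (hsumm s)]
    apply tsum_congr; intro z
    rw [← aux_mid_diff s t (F0 (z-1)) (F0 z) hst (hF0lt z).le]
    simp only [hm]; ring
  -- length sums
  have hlne : ∀ s t : ℝ, ∀ z : ℤ, volume (Ioc s t ∩ Ioc (F0 (z-1)) (F0 z)) ≠ ⊤ :=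
    fun s t z => ne_of_lt (lt_of_le_of_lt (measure_mono inter_subset_left)
      (by rw [Real.volume_Ioc]; exact ENNReal.ofReal_lt_top))
  have hldisj : ∀ s t : ℝ,
      Pairwise (Function.onFun Disjoint fun z : ℤ => Ioc s t ∩ Ioc (F0 (z-1)) (F0 z)) := by
    intro s t i j hij
    have hbase : Disjoint (Ioc (F0 (i-1)) (F0 i)) (Ioc (F0 (j-1)) (F0 j)) := by
      rw [Set.Ioc_disjoint_Ioc]
      rcases hij.lt_or_gt with h | h
      · exact le_trans (min_le_left _ _)
          (le_trans (hmonoF.monotone (by omega : i ≤ j - 1)) (le_max_right _ _))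
      · exact le_trans (min_le_right _ _)
          (le_trans (hmonoF.monotone (by omega : j ≤ i - 1)) (le_max_left _ _))
    exact hbase.mono inter_subset_right inter_subset_right
  have hlsum_fin : ∀ s t : ℝ,
      (∑' z : ℤ, volume (Ioc s t ∩ Ioc (F0 (z-1)) (F0 z))) ≤ ENNReal.ofReal (t - s) := by
    intro s t
    rw [← measure_iUnion (hldisj s t)
      (fun z => measurableSet_Ioc.inter measurableSet_Ioc)]
    refine le_trans (measure_mono (iUnion_subset fun z => inter_subset_left)) ?_
    rw [Real.volume_Ioc]
  have hlsummable : ∀ s t : ℝ,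
      Summable (fun z : ℤ => (volume (Ioc s t ∩ Ioc (F0 (z-1)) (F0 z))).toReal) :=
    fun s t => ENNReal.summable_toReal
      (ne_of_lt (lt_of_le_of_lt (hlsum_fin s t) ENNReal.ofReal_lt_top))
  have hlsum_le : ∀ s t : ℝ, s ≤ t →
      (∑' z : ℤ, (volume (Ioc s t ∩ Ioc (F0 (z-1)) (F0 z))).toReal) ≤ t - s := by
    intro s t hst
    rw [← ENNReal.tsum_toReal_eq (hlne s t)]
    refine le_trans (ENNReal.toReal_mono ENNReal.ofReal_ne_top (hlsum_fin s t)) ?_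
    rw [ENNReal.toReal_ofReal (by linarith)]
  -- bound (a)
  have hboundA : ∀ s t : ℝ, s ≤ t → ∀ x : ℤ, t ≤ F0 x → G t - G s ≤ d x * (t - s) := by
    intro s t hst x hx
    rw [hdiff s t hst]
    have h1 : ∀ z : ℤ, d z * (volume (Ioc s t ∩ Ioc (F0 (z-1)) (F0 z))).toReal
        ≤ d x * (volume (Ioc s t ∩ Ioc (F0 (z-1)) (F0 z))).toReal := by
      intro z
      rcases le_or_gt z x with h | h
      · rcases eq_or_lt_of_le h with rfl | h
        · exact le_refl _
        · exact mul_le_mul_of_nonneg_right (hMLR z x h) ENNReal.toReal_nonneg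
      · have he : Ioc s t ∩ Ioc (F0 (z-1)) (F0 z) = ∅ := by
          rw [Set.Ioc_inter_Ioc, Set.Ioc_eq_empty]
          push_neg
          exact le_trans (min_le_left _ _)
            (le_trans (le_trans hx (hmonoF.monotone (by omega : x ≤ z - 1))) (le_max_right _ _))
        simp [he]
    have hsum2 := (hlsummable s t).mul_left (d x)
    have hsum1 : Summable (fun z : ℤ =>
        d z * (volume (Ioc s t ∩ Ioc (F0 (z-1)) (F0 z))).toReal) :=
      Summable.of_nonneg_of_le
        (fun z => mul_nonneg (hd0 z) ENNReal.toReal_nonneg) h1 hsum2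
    calc (∑' z : ℤ, d z * (volume (Ioc s t ∩ Ioc (F0 (z-1)) (F0 z))).toReal)
        ≤ ∑' z : ℤ, d x * (volume (Ioc s t ∩ Ioc (F0 (z-1)) (F0 z))).toReal :=
          Summable.tsum_le_tsum h1 hsum1 hsum2
      _ = d x * ∑' z : ℤ, (volume (Ioc s t ∩ Ioc (F0 (z-1)) (F0 z))).toReal := tsum_mul_left
      _ ≤ d x * (t - s) := mul_le_mul_of_nonneg_left (hlsum_le s t hst) (hd0 x)
  -- bound (b)
  have hboundB : ∀ s t : ℝ, s ≤ t → t ≤ 1 → ∀ x : ℤ, F0 (x-1) ≤ s →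
      d x * (t - s) ≤ G t - G s := by
    intro s t hst ht1 x hx
    rw [hdiff s t hst]
    set L : ℤ → ENNReal := fun z => volume (Ioc s t ∩ Ioc (F0 (z-1)) (F0 z)) with hL
    have h1 : ∀ z : ℤ, (if x ≤ z then d x * (L z).toReal else 0) ≤ d z * (L z).toReal := by
      intro z; split_ifs with h
      · rcases eq_or_lt_of_le h with rfl | h
        · exact le_refl _
        · exact mul_le_mul_of_nonneg_right (hMLR x z h) ENNReal.toReal_nonneg
      · exact mul_nonneg (hd0 z) ENNReal.toReal_nonneg
    -- cover lower bound in ENNReal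
    have h2 : ENNReal.ofReal (t - s) ≤ ∑' z : ℤ, (if x ≤ z then L z else 0) := by
      have hcover : Ioo s t ⊆
          ⋃ z : ℤ, (if x ≤ z then Ioc s t ∩ Ioc (F0 (z-1)) (F0 z) else ∅) := by
        intro u hu
        have hu0 : 0 < u := lt_of_le_of_lt (le_trans (hF0pos (x-1)).le hx) hu.1
        have hu1 : u < 1 := lt_of_lt_of_le hu.2 ht1
        obtain ⟨z, hz1, hz2⟩ := hfind u hu0 hu1
        have hxz : x ≤ z := by
          by_contra hc; push_neg at hc
          have : F0 z ≤ F0 (x-1) := hmonoF.monotone (by omega)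
          linarith [hu.1]
        refine mem_iUnion.mpr ⟨z, ?_⟩
        rw [if_pos hxz]
        exact ⟨⟨hu.1, hu.2.le⟩, ⟨hz1, hz2⟩⟩
      have hmeas : ∀ z : ℤ, MeasurableSet
          (if x ≤ z then Ioc s t ∩ Ioc (F0 (z-1)) (F0 z) else (∅ : Set ℝ)) := by
        intro z; split_ifs
        · exact measurableSet_Ioc.inter measurableSet_Ioc
        · exact MeasurableSet.empty
      have hdisj2 : Pairwise (Function.onFun Disjoint fun z : ℤ =>
          if x ≤ z then Ioc s t ∩ Ioc (F0 (z-1)) (F0 z) else (∅ : Set ℝ)) := by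
        intro i j hij
        have hsub : ∀ k : ℤ, (if x ≤ k then Ioc s t ∩ Ioc (F0 (k-1)) (F0 k) else (∅ : Set ℝ))
            ⊆ Ioc s t ∩ Ioc (F0 (k-1)) (F0 k) := by
          intro k; split_ifs
          · exact subset_rfl
          · exact empty_subset _
        exact Disjoint.mono (hsub i) (hsub j) (hldisj s t hij)
      calc ENNReal.ofReal (t - s) = volume (Ioo s t) := by rw [Real.volume_Ioo]
        _ ≤ volume (⋃ z : ℤ, (if x ≤ z then Ioc s t ∩ Ioc (F0 (z-1)) (F0 z) else ∅)) :=
            measure_mono hcover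
        _ = ∑' z : ℤ, volume (if x ≤ z then Ioc s t ∩ Ioc (F0 (z-1)) (F0 z) else ∅) :=
            measure_iUnion hdisj2 hmeas
        _ = ∑' z : ℤ, (if x ≤ z then L z else 0) := by
            apply tsum_congr; intro z
            rw [apply_ite volume, measure_empty]
      -- end
    have hiteLne : ∀ z : ℤ, (if x ≤ z then L z else 0) ≠ ⊤ := by
      intro z; split_ifs
      · exact hlne s t z
      · exact ENNReal.zero_ne_top
    have hitefin : (∑' z : ℤ, (if x ≤ z then L z else 0)) ≠ ⊤ := by
      refine ne_of_lt (lt_of_le_of_lt (Summable.tsum_le_tsum (fun z => ?_) ENNReal.summable ENNReal.summable)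
        (lt_of_le_of_lt (hlsum_fin s t) ENNReal.ofReal_lt_top))
      split_ifs
      · exact le_refl _
      · exact zero_le
    have h3 : t - s ≤ ∑' z : ℤ, (if x ≤ z then (L z).toReal else 0) := by
      have : (∑' z : ℤ, (if x ≤ z then L z else 0)).toReal
          = ∑' z : ℤ, (if x ≤ z then (L z).toReal else 0) := by
        rw [ENNReal.tsum_toReal_eq hiteLne]
        apply tsum_congr; intro z
        rw [apply_ite ENNReal.toReal, ENNReal.toReal_zero]
      rw [← this]
      calc t - s = (ENNReal.ofReal (t - s)).toReal := by
            rw [ENNReal.toReal_ofReal (by linarith)]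
        _ ≤ _ := ENNReal.toReal_mono hitefin h2
    have hsumfull : Summable (fun z : ℤ => d z * (L z).toReal) := by
      refine Summable.of_nonneg_of_le (fun z => mul_nonneg (hd0 z) ENNReal.toReal_nonneg)
        (fun z => ?_) (hp1sum)
      calc d z * (L z).toReal ≤ d z * (m z t - F0 (z-1) - (m z s - F0 (z-1))) := le_of_eq (by
            rw [show m z t - F0 (z-1) - (m z s - F0 (z-1)) = m z t - m z s by ring,
              aux_mid_diff s t (F0 (z-1)) (F0 z) hst (hF0lt z).le])
        _ ≤ p1 z := by
            have h1' := hterm_le z t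
            have h2' := hterm_nonneg z s
            nlinarith [hd0 z]
    have hsumite : Summable (fun z : ℤ => if x ≤ z then d x * (L z).toReal else 0) := by
      refine Summable.of_nonneg_of_le (fun z => ?_) (fun z => ?_)
        ((hlsummable s t).mul_left (d x))
      · split_ifs
        · exact mul_nonneg (hd0 x) ENNReal.toReal_nonneg
        · exact le_refl _
      · split_ifs
        · exact le_refl _
        · exact mul_nonneg (hd0 x) ENNReal.toReal_nonneg
    calc d x * (t - s) ≤ d x * ∑' z : ℤ, (if x ≤ z then (L z).toReal else 0) :=
          mul_le_mul_of_nonneg_left h3 (hd0 x)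
      _ = ∑' z : ℤ, (if x ≤ z then d x * (L z).toReal else 0) := by
          rw [← tsum_mul_left]
          apply tsum_congr; intro z
          rw [mul_ite, mul_zero]
      _ ≤ ∑' z : ℤ, d z * (L z).toReal := Summable.tsum_le_tsum h1 hsumite hsumfull
  -- conclude
  constructor
  · apply convexOn_of_slope_mono_adjacent (convex_Icc (0:ℝ) 1)
    intro u v w hu hw huv hvw
    have hv0 : 0 < v := lt_of_le_of_lt hu.1 huv
    have hv1 : v < 1 := lt_of_lt_of_le hvw hw.2
    obtain ⟨x, hx1, hx2⟩ := hfind v hv0 hv1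
    have hA := hboundA u v huv.le x hx2
    have hB := hboundB v w hvw.le hw.2 x hx1.le
    rw [div_le_div_iff₀ (by linarith) (by linarith)]
    calc (G v - G u) * (w - v) ≤ (d x * (v - u)) * (w - v) :=
          mul_le_mul_of_nonneg_right hA (by linarith)
      _ = (d x * (w - v)) * (v - u) := by ring
      _ ≤ (G w - G v) * (v - u) := mul_le_mul_of_nonneg_right hB (by linarith)
  · intro x y hy
    have hA := hboundA (F0 (x-1)) y hy.1 x hy.2
    have hB := hboundB (F0 (x-1)) y hy.1 (le_trans hy.2 (hle1 x)) x (le_refl _)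
    have : G y - G (F0 (x-1)) = d x * (y - F0 (x-1)) := le_antisymm hA hB
    simp only [hd] at this
    linarith
end

section
/- For the discrete case above, P(Y ≤ y) = F¹(x − 1) + (p¹(x)/p⁰(x)) · (y − F⁰(x − 1)) for every y ∈ [F⁰(x−1), F⁰(x)], where x is the unique integer with F⁰(x−1) ≤ y ≤ F⁰(x) (assuming p⁰(x) > 0), and F¹ is the cdf of N¹. -/
open MeasureTheory Set ProbabilityTheory

/-- in the discrete randomized-quantile setting,
`P(Y ≤ y) = F¹(x-1) + (p¹(x)/p⁰(x)) (y - F⁰(x-1))` for every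
`y ∈ [F⁰(x-1), F⁰(x)]`, where `F¹` is the cdf of `N¹`. -/
theorem discrete_randomized_quantile_cdf_formula
    {Ω : Type*} [MeasurableSpace Ω] (P : Measure Ω) [IsProbabilityMeasure P]
    (p0 p1 : ℤ → ℝ) (F0 F1 : ℤ → ℝ)
    (hp0pos : ∀ x, 0 < p0 x) (hp1nonneg : ∀ x, 0 ≤ p1 x)
    (hF0step : ∀ x : ℤ, F0 x = F0 (x - 1) + p0 x)
    (hF0bot : Filter.Tendsto F0 Filter.atBot (nhds 0))
    (hF0top : Filter.Tendsto F0 Filter.atTop (nhds 1))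
    (N1 : Ω → ℤ) (U : Ω → ℝ) (hN1m : Measurable N1) (hUm : Measurable U)
    (hindep : IndepFun N1 U P)
    (hU : Measure.map U P = volume.restrict (Ioo (0:ℝ) 1))
    (hp1 : ∀ x : ℤ, p1 x = (P {ω | N1 ω = x}).toReal)
    (hF1 : ∀ x : ℤ, F1 x = (P {ω | N1 ω ≤ x}).toReal) :
    ∀ x : ℤ, ∀ y ∈ Icc (F0 (x - 1)) (F0 x),
      (P {ω | (1 - U ω) * F0 (N1 ω - 1) + U ω * F0 (N1 ω) ≤ y}).toReal
        = F1 (x - 1) + p1 x / p0 x * (y - F0 (x - 1)) := by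
  intro x y hy
  obtain ⟨hy1, hy2⟩ := hy
  have hmono : StrictMono F0 := by
    apply strictMono_int_of_lt_succ
    intro n
    have h := hF0step (n + 1)
    have h2 := hp0pos (n + 1)
    have hn : (n + 1 - 1 : ℤ) = n := by ring
    rw [hn] at h
    linarith
  set t : ℝ := (y - F0 (x - 1)) / p0 x with ht
  have hpx := hp0pos x
  have h0t : 0 ≤ t := div_nonneg (by linarith) hpx.le
  have ht1 : t ≤ 1 := by
    rw [ht, div_le_one hpx]
    have h := hF0step x
    linarith
  set G : Set Ω := U ⁻¹' (Ioo 0 1) with hGdef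
  have hGmeas : MeasurableSet G := hUm measurableSet_Ioo
  have hPG : P G = 1 := by
    have hm := Measure.map_apply (μ := P) hUm (measurableSet_Ioo : MeasurableSet (Ioo (0:ℝ) 1))
    rw [hU] at hm
    rw [hGdef, ← hm, Measure.restrict_apply measurableSet_Ioo, inter_self, Real.volume_Ioo]
    norm_num
  have hGc : P Gᶜ = 0 := by
    rw [measure_compl hGmeas (measure_ne_top _ _), hPG, measure_univ, tsub_self]
  have null_inter : ∀ S : Set Ω, P (S ∩ G) = P S := by
    intro S
    refine le_antisymm (measure_mono inter_subset_left) ?_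
    calc P S = P (S ∩ G ∪ S ∩ Gᶜ) := by rw [inter_union_compl]
      _ ≤ P (S ∩ G) + P (S ∩ Gᶜ) := measure_union_le _ _
      _ = P (S ∩ G) := by
          rw [measure_inter_null_of_null_right _ hGc, add_zero]
  set A : Set Ω := {ω | (1 - U ω) * F0 (N1 ω - 1) + U ω * F0 (N1 ω) ≤ y} with hA
  set B1 : Set Ω := {ω | N1 ω ≤ x - 1} with hB1
  set B2 : Set Ω := N1 ⁻¹' {x} ∩ U ⁻¹' (Iic t) with hB2
  have hYω : ∀ ω, (1 - U ω) * F0 (N1 ω - 1) + U ω * F0 (N1 ω)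
      = F0 (N1 ω - 1) + U ω * p0 (N1 ω) := by
    intro ω
    linear_combination (U ω) * hF0step (N1 ω)
  have hkey : A ∩ G = (B1 ∪ B2) ∩ G := by
    ext ω
    simp only [hA, hB1, hB2, hGdef, mem_inter_iff, mem_setOf_eq, mem_union,
      mem_preimage, mem_Ioo, mem_Iic, mem_singleton_iff]
    constructor
    · rintro ⟨hYy, hU0, hU1⟩
      refine ⟨?_, hU0, hU1⟩
      rw [hYω ω] at hYy
      rcases lt_trichotomy (N1 ω) x with h | h | h
      · left; omega
      · right
        refine ⟨h, ?_⟩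
        rw [h] at hYy
        rw [ht, le_div_iff₀ hpx]
        linarith
      · exfalso
        have h1 : x ≤ N1 ω - 1 := by omega
        have h2 : F0 x ≤ F0 (N1 ω - 1) := hmono.monotone h1
        have h3 : 0 < U ω * p0 (N1 ω) := mul_pos hU0 (hp0pos _)
        linarith
    · rintro ⟨hb, hU0, hU1⟩
      refine ⟨?_, hU0, hU1⟩
      rw [hYω ω]
      rcases hb with h | ⟨h, hut⟩
      · have h2 : F0 (N1 ω) ≤ F0 (x - 1) := hmono.monotone h
        have h3 := hF0step (N1 ω)
        have h4 : U ω * p0 (N1 ω) ≤ p0 (N1 ω) := by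
          nlinarith [hp0pos (N1 ω)]
        linarith
      · rw [h]
        have hle : U ω * p0 x ≤ t * p0 x := by nlinarith
        rw [ht, div_mul_cancel₀] at hle
        · linarith
        · exact hpx.ne'
  have hB2meas : MeasurableSet B2 :=
    (hN1m (measurableSet_singleton x)).inter (hUm measurableSet_Iic)
  have hdisj : Disjoint B1 B2 := by
    rw [Set.disjoint_left]
    rintro ω h1 ⟨h2, _⟩
    simp only [hB1, mem_setOf_eq] at h1
    simp only [mem_preimage, mem_singleton_iff] at h2
    omega
  have hPA : P A = P B1 + P B2 := by
    rw [← null_inter A, hkey, null_inter, measure_union hdisj hB2meas]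
  have hPU : P (U ⁻¹' Iic t) = ENNReal.ofReal t := by
    have hm := Measure.map_apply (μ := P) hUm (measurableSet_Iic : MeasurableSet (Iic t))
    rw [hU] at hm
    rw [← hm, Measure.restrict_apply measurableSet_Iic]
    refine le_antisymm ?_ ?_
    · calc volume (Iic t ∩ Ioo 0 1) ≤ volume (Ioc 0 t) := by
            apply measure_mono
            rintro u ⟨hu1, hu2, hu3⟩
            exact ⟨hu2, hu1⟩
        _ = ENNReal.ofReal t := by rw [Real.volume_Ioc, sub_zero]
    · calc ENNReal.ofReal t = volume (Ioo 0 t) := by rw [Real.volume_Ioo, sub_zero]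
        _ ≤ volume (Iic t ∩ Ioo 0 1) := by
            apply measure_mono
            rintro u ⟨hu1, hu2⟩
            exact ⟨hu2.le, hu1, lt_of_lt_of_le hu2 ht1⟩
  have hPB2 : P B2 = P (N1 ⁻¹' {x}) * ENNReal.ofReal t := by
    rw [hB2, hindep.measure_inter_preimage_eq_mul _ _ (measurableSet_singleton x)
      measurableSet_Iic, hPU]
  have hsets1 : {ω | N1 ω = x} = N1 ⁻¹' {x} := rfl
  rw [hPA, hPB2, hF1, hp1, hsets1, ← hB1]
  rw [ENNReal.toReal_add (measure_ne_top _ _)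
    (ENNReal.mul_ne_top (measure_ne_top _ _) ENNReal.ofReal_ne_top),
    ENNReal.toReal_mul, ENNReal.toReal_ofReal h0t, ht]
  ring
end
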